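/- With V, g, P, π, ω, Ric, Ric⁴ and r, r⁴ as in the pointwise model, the manifold is of Einstein type of the fourth kind if and only if it is quasi-Einstein with Ricci tensor Ric = (1/n)·(r − (n−1)·π(P))·g + (n−1)·(π⊗π); that is, Ric⁴ = (r⁴/n)·g holds if and only if Ric = (1/n)·(r − (n−1)·π(P))·g + (n−1)·(π⊗π). -/

import Mathlib

/-- The `g`-trace of a bilinear form `B`: the trace of the endomorphism
`(g♭)⁻¹ ∘ B♭` of `V`, where `B♭ : V → V*` is `X ↦ B(X,·)`. -/
noncomputable def trG {V : Type*} [AddCommGroup V] [Module ℝ V] [FiniteDimensional ℝ V]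
    (g : LinearMap.BilinForm ℝ V) (hg : g.Nondegenerate)
    (B : LinearMap.BilinForm ℝ V) : ℝ :=
  LinearMap.trace ℝ V ((g.toDual hg).symm.toLinearMap ∘ₗ B)

lemma trG_sub {V : Type*} [AddCommGroup V] [Module ℝ V] [FiniteDimensional ℝ V]
    (g : LinearMap.BilinForm ℝ V) (hg : g.Nondegenerate)
    (B C : LinearMap.BilinForm ℝ V) : trG g hg (B - C) = trG g hg B - trG g hg C := by
  simp [trG, LinearMap.comp_sub]

lemma trG_smul {V : Type*} [AddCommGroup V] [Module ℝ V] [FiniteDimensional ℝ V]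
    (g : LinearMap.BilinForm ℝ V) (hg : g.Nondegenerate)
    (c : ℝ) (B : LinearMap.BilinForm ℝ V) : trG g hg (c • B) = c * trG g hg B := by
  simp [trG, LinearMap.comp_smul]

lemma trG_self {V : Type*} [AddCommGroup V] [Module ℝ V] [FiniteDimensional ℝ V]
    (g : LinearMap.BilinForm ℝ V) (hg : g.Nondegenerate) :
    trG g hg g = Module.finrank ℝ V := by
  have h : (g.toDual hg).symm.toLinearMap ∘ₗ g = LinearMap.id := by
    ext x
    simp only [LinearMap.comp_apply, LinearMap.id_apply, LinearEquiv.coe_coe]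
    rw [LinearEquiv.symm_apply_eq]
    ext y
    exact (LinearMap.BilinForm.toDual_def hg).symm
  rw [trG, h, LinearMap.trace_id]

lemma trG_smulRight {V : Type*} [AddCommGroup V] [Module ℝ V] [FiniteDimensional ℝ V]
    (g : LinearMap.BilinForm ℝ V) (hg : g.Nondegenerate) (hgs : g.IsSymm)
    (P : V) : trG g hg ((g.flip P).smulRight (g.flip P)) = g P P := by
  have h : (g.toDual hg).symm.toLinearMap ∘ₗ ((g.flip P).smulRight (g.flip P))
      = (g.flip P).smulRight ((g.toDual hg).symm (g.flip P)) := by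
    ext x; simp
  rw [trG, h]
  have h2 : (g.toDual hg).symm (g.flip P) = P := by
    rw [LinearEquiv.symm_apply_eq]
    ext y
    rw [LinearMap.BilinForm.toDual_def hg]
    simpa using (LinearMap.BilinForm.isSymm_def.mp hgs P y).symm
  rw [h2]
  have := LinearMap.trace_eq_contract_apply ℝ V ((g.flip P) ⊗ₜ[ℝ] P)
  have heq : (dualTensorHom ℝ V V) ((g.flip P) ⊗ₜ[ℝ] P) = (g.flip P).smulRight P := by
    ext x; simp
  rw [heq] at this
  rw [this, contractLeft_apply]
  simp

theorem stmt_5 {V : Type*} [AddCommGroup V] [Module ℝ V] [FiniteDimensional ℝ V]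
    (n : ℕ) (hn : 3 ≤ n) (hdim : Module.finrank ℝ V = n)
    (g : LinearMap.BilinForm ℝ V) (hg : g.Nondegenerate) (hgs : g.IsSymm)
    (P : V) (π : V →ₗ[ℝ] ℝ) (hπ : π = g.flip P) (ω : ℝ)
    (ππ : LinearMap.BilinForm ℝ V) (hππ : ππ = π.smulRight π)
    (Ric : LinearMap.BilinForm ℝ V) (hRicSymm : Ric.IsSymm)
    (Ric4 : LinearMap.BilinForm ℝ V)
    (hRic4 : Ric4 = Ric - (((n : ℝ) - 1) * ω) • g - ((n : ℝ) - 1) • ππ) :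
    Ric4 = (trG g hg Ric4 / (n : ℝ)) • g ↔
      Ric = ((1 / (n : ℝ)) * (trG g hg Ric - ((n : ℝ) - 1) * π P)) • g
        + ((n : ℝ) - 1) • ππ := by
  have hn0 : (n : ℝ) ≠ 0 := by positivity
  have htrpp : trG g hg ππ = π P := by
    rw [hππ, hπ]
    simpa using trG_smulRight g hg hgs P
  have htr4 : trG g hg Ric4
      = trG g hg Ric - ((n : ℝ) - 1) * ω * n - ((n : ℝ) - 1) * π P := by
    rw [hRic4, trG_sub, trG_sub, trG_smul, trG_smul, trG_self, hdim, htrpp]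
  have key : trG g hg Ric4 / n
      = (1 / (n : ℝ)) * (trG g hg Ric - ((n : ℝ) - 1) * π P) - ((n : ℝ) - 1) * ω := by
    rw [htr4]; field_simp; ring
  rw [key, hRic4]
  set A := (1 / (n : ℝ)) * (trG g hg Ric - ((n : ℝ) - 1) * π P) with hA
  constructor <;> intro h <;>
  · ext x y
    have hxy := LinearMap.congr_fun (LinearMap.congr_fun h x) y
    simp only [LinearMap.sub_apply, LinearMap.add_apply, LinearMap.smul_apply,
      smul_eq_mul] at hxy ⊢
    linarith
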